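/- Let p be a prime, K a field of characteristic p, and C a nonzero right ideal of KG (G a finite group) with d(C) \cdot dim_K(C) = |G|. Then C = e·KG for some idempotent e \in KG (e = e^2) if and only if p does not divide d(C). -/

import Mathlib

open MonoidAlgebra

attribute [local instance] Classical.propDecidable

/-- Coefficientwise (Schur) product on the group algebra. -/
noncomputable def schur {K G : Type*} [Semiring K] (f g : MonoidAlgebra K G) :
    MonoidAlgebra K G :=
  MonoidAlgebra.ofCoeff (Finsupp.zipWith (· * ·) (mul_zero 0) f.coeff g.coeff)

/-- `C` is a right ideal of the group algebra. -/
def IsRightIdeal {K G : Type*} [Field K] [Group G]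
    (C : Submodule K (MonoidAlgebra K G)) : Prop :=
  ∀ c ∈ C, ∀ v : MonoidAlgebra K G, c * v ∈ C

private theorem key {K G : Type*} [Field K] [Group G] [Fintype G]
    (C : Submodule K (MonoidAlgebra K G))
    (hI : ∀ c ∈ C, ∀ v : MonoidAlgebra K G, c * v ∈ C)
    {d : ℕ} (c : MonoidAlgebra K G) (hcC : c ∈ C) (h1 : c.coeff 1 ≠ 0)
    (hcard : c.coeff.support.card = d)
    (heq : d * Module.finrank K ↥C = Fintype.card G) :
    C = Submodule.span K (Set.range fun g : G => c * single g 1) ∧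
      ∀ u ∈ c.coeff.support, ∃ μ : K, μ ≠ 0 ∧ c * single u 1 = μ • c := by
  classical
  haveI : FiniteDimensional K (MonoidAlgebra K G) :=
    Module.Finite.equiv ((Finsupp.linearEquivFunOnFinite K K G).symm.trans (MonoidAlgebra.coeffLinearEquiv K).symm)
  set R : Set (MonoidAlgebra K G) := Set.range (fun g : G => c * single g 1) with hR
  have htrans_card : ∀ g : G, (c * single g (1:K)).coeff.support.card = d := fun g => by
    rw [MonoidAlgebra.support_coeff_mul_single c 1 (by simp) g, Finset.card_map, hcard]
  have htrans_mem : ∀ g : G, g ∈ (c * single g (1:K)).coeff.support := fun g => by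
    rw [Finsupp.mem_support_iff, MonoidAlgebra.coeff_mul_single_apply]
    simpa using h1
  have hRC : ∀ x ∈ R, x ∈ C := by
    rintro x ⟨g, rfl⟩; exact hI c hcC _
  have hRfin : R.Finite := Set.finite_range _
  obtain ⟨b, hbR, hspan, hbli⟩ := exists_linearIndependent K R
  have hbfin : b.Finite := hRfin.subset hbR
  haveI := hbfin.fintype
  set B : Finset (MonoidAlgebra K G) := b.toFinset with hBdef
  have hBcoe : (B : Set (MonoidAlgebra K G)) = b := Set.coe_toFinset b
  have hfr : Module.finrank K (Submodule.span K b) = B.card := by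
    rw [finrank_span_set_eq_card hbli]
  have hbC : Submodule.span K b ≤ C := by
    rw [hspan, Submodule.span_le]; exact hRC
  -- every element of B is a translate, so has support of size d
  have hBsupp : ∀ x ∈ B, x.coeff.support.card = d := by
    intro x hx
    obtain ⟨g, hg⟩ := hbR (Set.mem_toFinset.1 hx)
    rw [← hg]
    exact htrans_card g
  -- supports of elements of span of B bound the support
  have hsuppspan : ∀ x ∈ Submodule.span K b, x.coeff.support ⊆ B.biUnion fun y => y.coeff.support := by
    intro x hx
    induction hx using Submodule.span_induction with
    | mem y hy => exact Finset.subset_biUnion_of_mem (fun y : MonoidAlgebra K G => y.coeff.support) (Set.mem_toFinset.2 hy)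
    | zero => simp
    | add y z _ _ hy hz => rw [MonoidAlgebra.coeff_add]; exact (Finsupp.support_add).trans (Finset.union_subset hy hz)
    | smul a y _ hy => rw [MonoidAlgebra.coeff_smul]; exact (Finsupp.support_smul).trans hy
  have hcover : (Finset.univ : Finset G) ⊆ (B.biUnion fun y => y.coeff.support).image id := by
    intro g _
    have hmem : (c * single g (1:K)) ∈ Submodule.span K b := by
      rw [hspan]; exact Submodule.subset_span ⟨g, rfl⟩
    simpa using hsuppspan _ hmem (htrans_mem g)
  have hcover' : (Finset.univ : Finset G) ⊆ B.biUnion fun y => y.coeff.support := by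
    simpa using hcover
  have hn : Fintype.card G ≤ B.card * d := by
    calc Fintype.card G = (Finset.univ : Finset G).card := rfl
    _ ≤ (B.biUnion fun y => y.coeff.support).card := Finset.card_le_card hcover'
    _ ≤ ∑ x ∈ B, x.coeff.support.card := Finset.card_biUnion_le
    _ = B.card * d := by
        rw [Finset.sum_congr rfl hBsupp, Finset.sum_const, smul_eq_mul]
  have hd0 : d ≠ 0 := by
    intro h
    rw [h, Finset.card_eq_zero, Finsupp.support_eq_empty] at hcard
    exact h1 (by rw [hcard]; rfl)
  set k := Module.finrank K ↥C with hk
  have hBk : B.card = k := by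
    have h2 : B.card ≤ k := hfr ▸ Submodule.finrank_mono hbC
    have h3 : k ≤ B.card := by
      have hkd : k * d ≤ B.card * d := by
        calc k * d = d * k := mul_comm _ _
        _ = Fintype.card G := heq
        _ ≤ B.card * d := hn
      exact Nat.le_of_mul_le_mul_right hkd (Nat.pos_of_ne_zero hd0)
    exact le_antisymm h2 h3
  -- span b = C
  have hVC : Submodule.span K b = C := by
    apply Submodule.eq_of_le_of_finrank_le hbC
    rw [hfr, hBk]
  have hCspanR : C = Submodule.span K R := by rw [← hVC, hspan]
  -- equality in counting forces pairwise disjoint supports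
  have hdisj : ∀ x ∈ B, ∀ x' ∈ B, x ≠ x' → Disjoint x.coeff.support x'.coeff.support := by
    intro x hx x' hx' hne
    rw [Finset.disjoint_left]
    intro t ht ht'
    have hsub2 : (Finset.univ : Finset G) ⊆
        (x.coeff.support.erase t) ∪ ((B.erase x).biUnion fun y => y.coeff.support) := by
      intro g hg
      have := hcover' hg
      rw [Finset.mem_biUnion] at this
      obtain ⟨z, hzB, hgz⟩ := this
      by_cases hzx : z = x
      · subst hzx
        by_cases hgt : g = t
        · subst hgt
          exact Finset.mem_union_right _
            (Finset.mem_biUnion.2 ⟨x', Finset.mem_erase.2 ⟨hne.symm, hx'⟩, ht'⟩)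
        · exact Finset.mem_union_left _ (Finset.mem_erase.2 ⟨hgt, hgz⟩)
      · exact Finset.mem_union_right _
          (Finset.mem_biUnion.2 ⟨z, Finset.mem_erase.2 ⟨hzx, hzB⟩, hgz⟩)
    have hcount : Fintype.card G ≤ (d - 1) + (B.card - 1) * d := by
      calc Fintype.card G = (Finset.univ : Finset G).card := rfl
      _ ≤ ((x.coeff.support.erase t) ∪ ((B.erase x).biUnion fun y => y.coeff.support)).card :=
          Finset.card_le_card hsub2
      _ ≤ (x.coeff.support.erase t).card + ((B.erase x).biUnion fun y => y.coeff.support).card :=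
          Finset.card_union_le _ _
      _ ≤ (d - 1) + (B.card - 1) * d := by
          apply Nat.add_le_add
          · rw [Finset.card_erase_of_mem ht, hBsupp x hx]
          · calc ((B.erase x).biUnion fun y => y.coeff.support).card
                ≤ ∑ y ∈ B.erase x, y.coeff.support.card := Finset.card_biUnion_le
            _ = (B.card - 1) * d := by
                rw [Finset.sum_congr rfl fun y hy => hBsupp y (Finset.mem_of_mem_erase hy),
                  Finset.sum_const, smul_eq_mul, Finset.card_erase_of_mem hx]
    have hd1 : 1 ≤ d := Nat.pos_of_ne_zero hd0
    have e1 : d * B.card = Fintype.card G := by rw [hBk]; exact heq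
    have hBpos : 1 ≤ B.card := by
      rcases Nat.eq_zero_or_pos B.card with h | h
      · exfalso
        rw [h, mul_zero] at e1
        exact Fintype.card_ne_zero e1.symm
      · exact h
    obtain ⟨k', hk'⟩ : ∃ k', B.card = k' + 1 := ⟨B.card - 1, by omega⟩
    rw [hk'] at e1 hcount
    have e2 : d * (k' + 1) = d * k' + d := by ring
    rw [e2] at e1
    have e3 : (k' + 1 - 1) * d = d * k' := by simp [mul_comm]
    rw [e3] at hcount
    generalize hm : d * k' = m at e1 hcount
    omega
  -- every translate is a scalar multiple of an element of B with the same support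
  have hone : ∀ g : G, ∃ x ∈ B, ∃ a : K, a ≠ 0 ∧ c * single g 1 = a • x ∧
      (c * single g (1:K)).coeff.support = x.coeff.support := by
    intro g
    have hmem : (c * single g (1:K)) ∈ Submodule.span K (↑B : Set (MonoidAlgebra K G)) := by
      rw [hBcoe, hspan]
      exact Submodule.subset_span ⟨g, rfl⟩
    obtain ⟨f, -, hf⟩ := Submodule.mem_span_finset.1 hmem
    set T : Finset (MonoidAlgebra K G) := B.filter (fun x => f x ≠ 0) with hT
    have hTB : T ⊆ B := Finset.filter_subset _ _
    have hsumT : ∑ x ∈ T, f x • x = c * single g 1 := by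
      rw [← hf]
      exact Finset.sum_filter_of_ne (fun x _ hne => by
        intro h0; rw [h0, zero_smul] at hne; exact hne rfl)
    set g' : MonoidAlgebra K G → MonoidAlgebra K G :=
      fun x => if x ∈ T then f x • x else 0 with hg'
    have hg'T : ∀ x ∈ T, g' x = f x • x := fun x hx => by simp [hg', hx]
    have hg'supp : ∀ x ∈ T, (g' x).coeff.support = x.coeff.support := by
      intro x hx
      rw [hg'T x hx, MonoidAlgebra.coeff_smul]
      exact Finsupp.support_smul_eq ((Finset.mem_filter.1 hx).2)
    have hdisj' : ∀ x₁ x₂ : MonoidAlgebra K G, x₁ ≠ x₂ →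
        Disjoint (g' x₁).coeff.support (g' x₂).coeff.support := by
      intro x₁ x₂ hne
      by_cases h1' : x₁ ∈ T
      · by_cases h2' : x₂ ∈ T
        · rw [hg'supp x₁ h1', hg'supp x₂ h2']
          exact hdisj x₁ (hTB h1') x₂ (hTB h2') hne
        · simp [hg', h2']
      · simp [hg', h1']
    have hsupp_eq : (c * single g (1:K)).coeff.support = T.biUnion fun x => (g' x).coeff.support := by
      rw [← hsumT, Finset.sum_congr rfl fun x hx => (hg'T x hx).symm, MonoidAlgebra.coeff_sum]
      exact Finsupp.support_sum_eq_biUnion T (fun i j hij => hdisj' i j hij)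
    have hcardT : d = T.card * d := by
      calc d = (c * single g (1:K)).coeff.support.card := (htrans_card g).symm
      _ = (T.biUnion fun x => (g' x).coeff.support).card := by rw [hsupp_eq]
      _ = ∑ x ∈ T, (g' x).coeff.support.card := by
          apply Finset.card_biUnion
          intro x hx y hy hxy
          exact hdisj' x y hxy
      _ = ∑ x ∈ T, d := Finset.sum_congr rfl (fun x hx => by
          rw [hg'supp x hx, hBsupp x (hTB hx)])
      _ = T.card * d := by rw [Finset.sum_const, smul_eq_mul]
    have hT1 : T.card = 1 := by
      have hd1 := Nat.pos_of_ne_zero hd0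
      by_contra hne
      rcases Nat.eq_zero_or_pos T.card with h | h
      · rw [h, zero_mul] at hcardT; omega
      · have h2 : 2 ≤ T.card := by omega
        have h3 : 2 * d ≤ T.card * d := Nat.mul_le_mul_right d h2
        generalize hm : T.card * d = m at hcardT h3
        omega
    obtain ⟨x₀, hx₀⟩ := Finset.card_eq_one.1 hT1
    have hx₀T : x₀ ∈ T := by rw [hx₀]; exact Finset.mem_singleton_self x₀
    refine ⟨x₀, hTB hx₀T, f x₀, (Finset.mem_filter.1 hx₀T).2, ?_, ?_⟩
    · rw [← hsumT, hx₀, Finset.sum_singleton]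
    · rw [hsupp_eq, hx₀, Finset.singleton_biUnion, hg'supp x₀ hx₀T]
  -- key quasi-invariance
  refine ⟨hCspanR, ?_⟩
  obtain ⟨x₁, hx₁B, a₁, ha₁, hca, hcs⟩ := hone 1
  have hc_eq : c = a₁ • x₁ := by
    rw [← hca]
    have : single (1:G) (1:K) = (1 : MonoidAlgebra K G) := rfl
    rw [this, mul_one]
  have hcsupp : c.coeff.support = x₁.coeff.support := by
    rw [← hcs]
    congr 1
    have : single (1:G) (1:K) = (1 : MonoidAlgebra K G) := rfl
    rw [this, mul_one]
  intro u hu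
  obtain ⟨xu, hxuB, au, hau, hua, hus⟩ := hone u
  have hx₁xu : x₁ = xu := by
    by_contra hne
    have hd' := hdisj x₁ hx₁B xu hxuB hne
    have hu1 : u ∈ x₁.coeff.support := hcsupp ▸ hu
    have hu2 : u ∈ xu.coeff.support := by
      rw [← hus]; exact htrans_mem u
    exact Finset.disjoint_left.1 hd' hu1 hu2
  refine ⟨au * a₁⁻¹, by simp [hau, ha₁], ?_⟩
  rw [hua, ← hx₁xu, hc_eq, smul_smul]
  congr 1
  field_simp

/-- In characteristic `p`, a right ideal with `d(C) · dim C = |G|` is generated by an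
idempotent iff `p ∤ d(C)`. -/
theorem stmt7 {K G : Type*} [Field K] [Group G] [Fintype G]
    (p : ℕ) [Fact p.Prime] [CharP K p]
    (C : Submodule K (MonoidAlgebra K G)) (hI : IsRightIdeal C) (hC : C ≠ ⊥)
    (d : ℕ) (hd : IsLeast {w | ∃ c ∈ C, c ≠ 0 ∧ c.coeff.support.card = w} d)
    (heq : d * Module.finrank K ↥C = Fintype.card G) :
    (∃ e : MonoidAlgebra K G, e * e = e ∧
        C = LinearMap.range (LinearMap.mulLeft K e)) ↔ ¬ p ∣ d := by
  classical
  obtain ⟨⟨c₀, hc₀C, hc₀ne, hc₀card⟩, -⟩ := hd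
  obtain ⟨s₀, hs₀⟩ : c₀.coeff.support.Nonempty := Finsupp.support_nonempty_iff.2 (mt MonoidAlgebra.coeff_eq_zero.1 hc₀ne)
  set c : MonoidAlgebra K G := c₀ * single s₀⁻¹ 1 with hcdef
  have hcC : c ∈ C := hI c₀ hc₀C _
  have h1 : c.coeff 1 ≠ 0 := by
    rw [hcdef, MonoidAlgebra.coeff_mul_single_apply]
    simpa using Finsupp.mem_support_iff.1 hs₀
  have hcard : c.coeff.support.card = d := by
    rw [hcdef, MonoidAlgebra.support_coeff_mul_single c₀ 1 (by simp) _, Finset.card_map, hc₀card]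
  obtain ⟨hCspan, hmu⟩ := key C hI c hcC h1 hcard heq
  have happly : ∀ u : G, ∀ μ : K, c * single u 1 = μ • c → ∀ y : G, c.coeff (y * u⁻¹) = μ * c.coeff y := by
    intro u μ h y
    have h' : (c * single u (1:K)).coeff y = (μ • c).coeff y := by rw [h]
    rw [MonoidAlgebra.coeff_mul_single_apply] at h'
    simpa using h'
  have hinv : ∀ u ∈ c.coeff.support, u⁻¹ ∈ c.coeff.support := by
    intro u hu
    obtain ⟨μ, hμ0, hμ⟩ := hmu u hu
    have h' := happly u μ hμ 1
    rw [one_mul] at h'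
    rw [Finsupp.mem_support_iff, h']
    exact mul_ne_zero hμ0 h1
  have hmuls : ∀ u ∈ c.coeff.support, ∀ v ∈ c.coeff.support, u * v ∈ c.coeff.support := by
    intro u hu v hv
    obtain ⟨μ, hμ0, hμ⟩ := hmu v hv
    have h' := happly v μ hμ (u * v)
    rw [mul_inv_cancel_right] at h'
    rw [Finsupp.mem_support_iff]
    intro h0
    rw [h0, mul_zero] at h'
    exact Finsupp.mem_support_iff.1 hu h'
  have hμval : ∀ u ∈ c.coeff.support, ∀ μ : K, c * single u 1 = μ • c → μ * c.coeff u = c.coeff 1 := by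
    intro u hu μ h
    have h' := happly u μ h u
    simpa using h'.symm
  have hcc : c * c = ((d : K) * c.coeff 1) • c := by
    have hdecomp : c * c = ∑ u ∈ c.coeff.support, c * single u (c.coeff u) := by
      have h0 := congrArg (fun w => c * w) (MonoidAlgebra.sum_coeff_single c).symm
      rw [h0, Finsupp.sum, Finset.mul_sum]
    rw [hdecomp]
    have hsummand : ∀ u ∈ c.coeff.support, c * single u (c.coeff u) = (c.coeff 1) • c := by
      intro u hu
      obtain ⟨μ, hμ0, hμ⟩ := hmu u hu
      have hs : single u (c.coeff u) = (c.coeff u) • single u (1:K) := by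
        rw [MonoidAlgebra.smul_single, smul_eq_mul, mul_one]
      rw [hs, mul_smul_comm, hμ, smul_smul, mul_comm (c.coeff u) μ, hμval u hu μ hμ]
    rw [Finset.sum_congr rfl hsummand, Finset.sum_const, hcard,
      ← Nat.cast_smul_eq_nsmul K, smul_smul]
  constructor
  · rintro ⟨e, he, hCe⟩ hpd
    have hdK : (d : K) = 0 := (CharP.cast_eq_zero_iff K p d).2 hpd
    have hcc0 : c * c = 0 := by rw [hcc, hdK, zero_mul, zero_smul]
    obtain ⟨z, hz⟩ : ∃ z, e * z = c := by
      have hcr : c ∈ LinearMap.range (LinearMap.mulLeft K e) := hCe ▸ hcC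
      obtain ⟨z, hz⟩ := hcr
      exact ⟨z, hz⟩
    have hec : e * c = c := by rw [← hz, ← mul_assoc, he]
    have heC : e ∈ C := by
      rw [hCe]
      exact ⟨e, by simpa [LinearMap.mulLeft_apply] using he⟩
    set φ : MonoidAlgebra K G →ₗ[K] K :=
      (Finsupp.lapply (1:G)) ∘ₗ (MonoidAlgebra.coeffLinearEquiv K).toLinearMap ∘ₗ (LinearMap.mulRight K c) with hφ
    have hφapply : ∀ x, φ x = (x * c).coeff 1 := fun x => rfl
    have hWR : ∀ x ∈ (Set.range fun g : G => c * single g (1:K)), φ x = 0 := by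
      rintro x ⟨g, rfl⟩
      simp only
      by_cases hg : g ∈ c.coeff.support
      · obtain ⟨μ, hμ0, hμ⟩ := hmu g hg
        rw [hφapply, hμ, smul_mul_assoc, hcc0, smul_zero]
        rfl
      · rw [hφapply]
        apply Finsupp.notMem_support_iff.1
        intro hmem
        have hsub := MonoidAlgebra.support_coeff_mul_subset (c * single g (1:K)) c hmem
        rw [Finset.mem_mul] at hsub
        obtain ⟨y, hy, z, hz', hyz⟩ := hsub
        rw [MonoidAlgebra.support_coeff_mul_single c 1 (by simp) g, Finset.mem_map] at hy
        obtain ⟨s, hs, rfl⟩ := hy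
        have hgeq : g = s⁻¹ * z⁻¹ := by
          have hyz' : s * g * z = 1 := hyz
          have h' : s * (g * z) = 1 := by rw [← mul_assoc]; exact hyz'
          have h2 : s⁻¹ = g * z := inv_eq_of_mul_eq_one_right h'
          rw [h2]
          group
        apply hg
        rw [hgeq]
        exact hmuls s⁻¹ (hinv s hs) z⁻¹ (hinv z hz')
    have hker : C ≤ LinearMap.ker φ := by
      rw [hCspan, Submodule.span_le]
      intro x hx
      exact LinearMap.mem_ker.2 (hWR x hx)
    have hφe : φ e = 0 := hker heC
    rw [hφapply, hec] at hφe
    exact h1 hφe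
  · intro hpd
    have hdK : (d : K) ≠ 0 := fun h => hpd ((CharP.cast_eq_zero_iff K p d).1 h)
    set γ : K := (d : K) * c.coeff 1 with hγ
    have hγ0 : γ ≠ 0 := mul_ne_zero hdK h1
    refine ⟨γ⁻¹ • c, ?_, ?_⟩
    · rw [smul_mul_assoc, mul_smul_comm, hcc, smul_smul, smul_smul]
      congr 1
      field_simp
    · apply le_antisymm
      · rw [hCspan, Submodule.span_le]
        rintro x ⟨g, rfl⟩
        refine ⟨γ • single g 1, ?_⟩
        rw [LinearMap.mulLeft_apply, smul_mul_assoc, mul_smul_comm, smul_smul,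
          inv_mul_cancel₀ hγ0, one_smul]
      · rintro x ⟨y, rfl⟩
        rw [LinearMap.mulLeft_apply, smul_mul_assoc]
        exact Submodule.smul_mem _ _ (hI c hcC y)
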